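/- Let A and B be lists of natural numbers, each sorted in nondecreasing order. Then merge(diff(A), diff(B)) = diff(sortedMerge(A, B)). That is, the spike-merge procedure applied directly to the differential encodings of two spike trains produces exactly the differential encoding of the chronologically merged spike train, without ever converting back to absolute times. -/

import Mathlib

/-- Differential encoding with respect to a previous time. -/
def diffAux : ℕ → List ℕ → List ℕ
  | _, [] => []
  | prev, a :: as => (a - prev) :: diffAux a as

/-- Differential encoding: `diff [a₁, …, aₙ] = [a₁ - 0, a₂ - a₁, …, aₙ - aₙ₋₁]`. -/
def diff (A : List ℕ) : List ℕ := diffAux 0 A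

/-- The spike-merge operation on differential-time encoded spike trains. -/
def smerge : List ℕ → List ℕ → List ℕ
  | [], ys => ys
  | xs, [] => xs
  | x :: xs, y :: ys =>
    if x ≤ y then x :: smerge xs ((y - x) :: ys)
    else y :: smerge ((x - y) :: xs) ys
termination_by xs ys => xs.length + ys.length
decreasing_by all_goals simp

lemma smerge_nil (xs : List ℕ) : smerge xs [] = xs := by
  cases xs <;> simp [smerge]

lemma smerge_key (p : ℕ) (A B : List ℕ) (hA : A.Pairwise (· ≤ ·)) (hB : B.Pairwise (· ≤ ·))
    (hpA : ∀ a ∈ A, p ≤ a) (hpB : ∀ b ∈ B, p ≤ b) :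
    smerge (diffAux p A) (diffAux p B) = diffAux p (A.merge B (· ≤ ·)) := by
  induction A generalizing p B with
  | nil => simp [diffAux, smerge, List.nil_merge]
  | cons a as ih =>
    induction B generalizing p with
    | nil => simp [diffAux, smerge_nil]
    | cons b bs ihB =>
      have hpa : p ≤ a := hpA a (by simp)
      have hpb : p ≤ b := hpB b (by simp)
      simp only [diffAux, List.cons_merge_cons]
      rw [smerge]
      by_cases hab : a ≤ b
      · rw [if_pos (by omega), if_pos (by simpa using hab)]
        have hba : b - p - (a - p) = b - a := by omega
        rw [hba]
        simp only [diffAux]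
        congr 1
        exact ih a (b :: bs) (List.pairwise_cons.mp hA).2 hB
          (fun x hx => (List.pairwise_cons.mp hA).1 x hx)
          (by intro x hx; rcases List.mem_cons.mp hx with h | h
              · omega
              · exact le_trans hab ((List.pairwise_cons.mp hB).1 x h))
      · rw [if_neg (by omega), if_neg (by simpa using hab)]
        have hba : a - p - (b - p) = a - b := by omega
        rw [hba]
        simp only [diffAux]
        congr 1
        exact ihB b (List.pairwise_cons.mp hB).2
          (by intro x hx; rcases List.mem_cons.mp hx with h | h
              · omega
              · exact le_trans (by omega) ((List.pairwise_cons.mp hA).1 x h))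
          (fun x hx => (List.pairwise_cons.mp hB).1 x hx)

/-- Proposition 1: merging differential encodings gives the differential
encoding of the chronologically (sorted) merged spike train. -/
theorem smerge_diff_eq_diff_sortedMerge
    (A B C : List ℕ)
    (hA : A.Pairwise (· ≤ ·)) (hB : B.Pairwise (· ≤ ·))
    (hC : C.Pairwise (· ≤ ·))
    (hCmul : (C : Multiset ℕ) = (A : Multiset ℕ) + (B : Multiset ℕ)) :
    smerge (diff A) (diff B) = diff C := by
  have hCeq : C = A.merge B (· ≤ ·) := by
    apply List.Perm.eq_of_pairwise' hC (hA.merge hB)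
    have h1 : C.Perm (A ++ B) := by
      rw [← Multiset.coe_eq_coe, ← Multiset.coe_add]
      exact hCmul
    exact h1.trans (List.merge_perm_append _).symm
  rw [hCeq]
  exact smerge_key 0 A B hA hB (fun _ _ => Nat.zero_le _) (fun _ _ => Nat.zero_le _)
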